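/- Fix integers y_1,…,y_N and reals a, b, and for (x_1,…,x_N) ∈ ℤ^N define W(x_1,…,x_N) = det[ v_{N+1−l}^{x_{N+1−l}} · F_{k,l}(x_{N+1−l} − y_{N+1−k}, a, b) ]_{1≤k,l≤N}. Then for every 2 ≤ j ≤ N and every point of ℤ^N whose (j−1)-st coordinate equals its j-th coordinate x_j, the value of W at that point equals (v_j / v_{j−1}) times the value of W at the point obtained by replacing the (j−1)-st coordinate by x_j + 1 and leaving all other coordinates unchanged. -/

import Mathlib

open Complex MeasureTheory
open scoped Real

/-- `F N v k l x a b r` is the contour integral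
`(1/(2πi)) ∮_{|z|=r} z^{x−1} e^{bz + a/z}
  (∏_{i=1}^{k−1} (1 − v_{N+1−i} z)) / (∏_{j=1}^{l−1} (1 − v_{N+1−j} z)) dz`. -/
noncomputable def F (N : ℕ) (v : ℕ → ℝ) (k l : ℕ) (x : ℤ) (a b r : ℝ) : ℂ :=
  (2 * (Real.pi : ℂ) * Complex.I)⁻¹ *
    ∮ z in C(0, r), z ^ (x - 1) * Complex.exp ((b : ℂ) * z + (a : ℂ) / z) *
      (∏ i ∈ Finset.range (k - 1), (1 - (v (N - i) : ℂ) * z)) /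
      ∏ j ∈ Finset.range (l - 1), (1 - (v (N - j) : ℂ) * z)

/-- `W N v y a b r X = det[ v_{N+1−l}^{X_{N+1−l}} F_{k,l}(X_{N+1−l} − y_{N+1−k}, a, b) ]`
(all indices 1-based in the mathematical notation; `X i.rev` is `X_{N+1-(i+1)}`
for the 0-based index `i`). -/
noncomputable def W (N : ℕ) (v : ℕ → ℝ) (y : Fin N → ℤ) (a b r : ℝ)
    (X : Fin N → ℤ) : ℂ :=
  Matrix.det (Matrix.of fun k l : Fin N =>
    (v (N - (l : ℕ)) : ℂ) ^ X l.rev *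
      F N v ((k : ℕ) + 1) ((l : ℕ) + 1) (X l.rev - y k.rev) a b r)

lemma one_sub_mul_ne_zero {c r : ℝ} (hc : 0 < c) (hcr : r < 1 / c) {z : ℂ}
    (hz : z ∈ Metric.sphere (0 : ℂ) r) : (1 : ℂ) - (c : ℂ) * z ≠ 0 := by
  have hz' : ‖z‖ = r := by simpa using hz
  intro h
  have h1 : (c : ℂ) * z = 1 := (sub_eq_zero.mp h).symm
  have h2 : ‖(c : ℂ) * z‖ = c * r := by
    simp [map_mul, hz', abs_of_pos hc]
  rw [h1] at h2
  simp at h2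
  have : c * r < 1 := by
    rw [lt_div_iff₀ hc] at hcr
    linarith [mul_comm r c]
  linarith [h2]

lemma sphere_ne_zero {r : ℝ} (hr : 0 < r) {z : ℂ} (hz : z ∈ Metric.sphere (0 : ℂ) r) :
    z ≠ 0 := by
  intro h0
  have : ‖z‖ = r := by simpa using hz
  rw [h0] at this
  simp at this
  exact hr.ne this

lemma contOn_integrand (N : ℕ) (v : ℕ → ℝ) (k m : ℕ) (x : ℤ) (a b r : ℝ) (hr : 0 < r)
    (hD : ∀ z ∈ Metric.sphere (0 : ℂ) r,
      (∏ i ∈ Finset.range m, (1 - (v (N - i) : ℂ) * z)) ≠ 0) :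
    ContinuousOn (fun z : ℂ => z ^ (x - 1) * Complex.exp ((b : ℂ) * z + (a : ℂ) / z) *
      (∏ i ∈ Finset.range (k - 1), (1 - (v (N - i) : ℂ) * z)) /
      ∏ i ∈ Finset.range m, (1 - (v (N - i) : ℂ) * z)) (Metric.sphere 0 r) := by
  apply ContinuousOn.div _ _ hD
  · apply ContinuousOn.mul
    · apply ContinuousOn.mul
      · exact fun z hz =>
          (continuousAt_zpow₀ z (x - 1) (Or.inl (sphere_ne_zero hr hz))).continuousWithinAt
      · apply Complex.continuous_exp.comp_continuousOn
        apply ContinuousOn.add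
        · exact (continuous_const.mul continuous_id).continuousOn
        · exact ContinuousOn.div continuousOn_const continuousOn_id
            fun z hz => sphere_ne_zero hr hz
    · exact (continuous_finset_prod _ fun i _ =>
        continuous_const.sub (continuous_const.mul continuous_id)).continuousOn
  · exact (continuous_finset_prod _ fun i _ =>
      continuous_const.sub (continuous_const.mul continuous_id)).continuousOn

lemma F_rec (N : ℕ) (v : ℕ → ℝ) (hv : ∀ i, 1 ≤ i → i ≤ N → 0 < v i)
    (r : ℝ) (hr : 0 < r) (hr' : ∀ i, 1 ≤ i → i ≤ N → r < 1 / v i)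
    (k m : ℕ) (hm : m < N) (x : ℤ) (a b : ℝ) :
    F N v k (m + 1) x a b r
      = F N v k (m + 2) x a b r - (v (N - m) : ℂ) * F N v k (m + 2) (x + 1) a b r := by
  have hne : ∀ i, i ≤ m → ∀ z ∈ Metric.sphere (0 : ℂ) r, (1 : ℂ) - (v (N - i) : ℂ) * z ≠ 0 := by
    intro i hi z hz
    have h1 : 1 ≤ N - i := by omega
    have h2 : N - i ≤ N := by omega
    exact one_sub_mul_ne_zero (hv _ h1 h2) (hr' _ h1 h2) hz
  have hDm : ∀ z ∈ Metric.sphere (0 : ℂ) r,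
      (∏ i ∈ Finset.range m, (1 - (v (N - i) : ℂ) * z)) ≠ 0 := by
    intro z hz
    rw [Finset.prod_ne_zero_iff]
    intro i hi
    exact hne i (by simpa using Nat.lt_succ_iff.mp (Nat.lt_succ_of_lt (Finset.mem_range.mp hi))) z hz
  have hDm1 : ∀ z ∈ Metric.sphere (0 : ℂ) r,
      (∏ i ∈ Finset.range (m + 1), (1 - (v (N - i) : ℂ) * z)) ≠ 0 := by
    intro z hz
    rw [Finset.prod_ne_zero_iff]
    intro i hi
    exact hne i (Nat.lt_succ_iff.mp (Finset.mem_range.mp hi)) z hz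
  set c : ℂ := (v (N - m) : ℂ) with hc
  set g2 : ℂ → ℂ := fun z => z ^ (x - 1) * Complex.exp ((b : ℂ) * z + (a : ℂ) / z) *
      (∏ i ∈ Finset.range (k - 1), (1 - (v (N - i) : ℂ) * z)) /
      ∏ i ∈ Finset.range (m + 1), (1 - (v (N - i) : ℂ) * z) with hg2
  set g3 : ℂ → ℂ := fun z => z ^ (x + 1 - 1) * Complex.exp ((b : ℂ) * z + (a : ℂ) / z) *
      (∏ i ∈ Finset.range (k - 1), (1 - (v (N - i) : ℂ) * z)) /
      ∏ i ∈ Finset.range (m + 1), (1 - (v (N - i) : ℂ) * z) with hg3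
  have hint2 : CircleIntegrable g2 0 r :=
    (contOn_integrand N v k (m + 1) x a b r hr hDm1).circleIntegrable hr.le
  have hint3 : CircleIntegrable (fun z => c • g3 z) 0 r := by
    apply ContinuousOn.circleIntegrable hr.le
    exact (continuousOn_const : ContinuousOn (fun _ : ℂ => c) _).smul (contOn_integrand N v k (m + 1) (x + 1) a b r hr hDm1)
  have key : (∮ z in C(0, r), z ^ (x - 1) * Complex.exp ((b : ℂ) * z + (a : ℂ) / z) *
      (∏ i ∈ Finset.range (k - 1), (1 - (v (N - i) : ℂ) * z)) /
      ∏ i ∈ Finset.range m, (1 - (v (N - i) : ℂ) * z))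
      = (∮ z in C(0, r), g2 z) - c * ∮ z in C(0, r), g3 z := by
    have hsm : c * (∮ z in C(0, r), g3 z) = ∮ z in C(0, r), c • g3 z := by
      rw [circleIntegral.integral_smul]
      simp [smul_eq_mul]
    rw [hsm, ← circleIntegral.integral_sub hint2 hint3]
    apply circleIntegral.integral_congr hr.le
    intro z hz
    have hz0 : z ≠ 0 := sphere_ne_zero hr hz
    have h1 : (1 : ℂ) - c * z ≠ 0 := hne m le_rfl z hz
    have hD : (∏ i ∈ Finset.range m, (1 - (v (N - i) : ℂ) * z)) ≠ 0 := hDm z hz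
    simp only [hg2, hg3, smul_eq_mul, Finset.prod_range_succ]
    rw [show (x + 1 - 1 : ℤ) = (x - 1) + 1 by ring, zpow_add_one₀ hz0, ← hc]
    generalize (∏ i ∈ Finset.range m, (1 - (v (N - i) : ℂ) * z)) = P at hD ⊢
    generalize (∏ i ∈ Finset.range (k - 1), (1 - (v (N - i) : ℂ) * z)) = Q
    have h1' : (1 : ℂ) - z * c ≠ 0 := by rwa [mul_comm]
    field_simp
  simp only [F, show m + 1 - 1 = m from rfl, show m + 2 - 1 = m + 1 from rfl]
  rw [key]
  ring

set_option maxHeartbeats 1000000 in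
/-- if the (j−1)-st coordinate equals the j-th coordinate `x_j`, then
`W` at that point equals `(v_j/v_{j−1})` times `W` at the point where the (j−1)-st
coordinate is replaced by `x_j + 1`. -/
theorem stmt4 (N : ℕ) (hN : 1 ≤ N) (v : ℕ → ℝ)
    (hv : ∀ i, 1 ≤ i → i ≤ N → 0 < v i)
    (r : ℝ) (hr : 0 < r) (hr' : ∀ j, 1 ≤ j → j ≤ N → r < 1 / v j)
    (y : Fin N → ℤ) (a b : ℝ)
    (j : ℕ) (hj2 : 2 ≤ j) (hjN : j ≤ N) (X : Fin N → ℤ)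
    (hX : X ⟨j - 2, by omega⟩ = X ⟨j - 1, by omega⟩) :
    W N v y a b r X
      = ((v j / v (j - 1) : ℝ) : ℂ) *
        W N v y a b r (Function.update X ⟨j - 2, by omega⟩ (X ⟨j - 1, by omega⟩ + 1)) := by
  suffices h : ∀ X' : Fin N → ℤ,
      X' = Function.update X ⟨j - 2, by omega⟩ (X ⟨j - 1, by omega⟩ + 1) →
      W N v y a b r X = ((v j / v (j - 1) : ℝ) : ℂ) * W N v y a b r X' from h _ rfl
  intro X' hX'def
  obtain ⟨x, hxdef⟩ : ∃ x : ℤ, x = X ⟨j - 1, by omega⟩ := ⟨_, rfl⟩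
  obtain ⟨L0, hL0⟩ : ∃ L : Fin N, (L : ℕ) = N - j + 1 := ⟨⟨N - j + 1, by omega⟩, rfl⟩
  obtain ⟨L1, hL1⟩ : ∃ L : Fin N, (L : ℕ) = N - j := ⟨⟨N - j, by omega⟩, rfl⟩
  have hrev0 : L0.rev = (⟨j - 2, by omega⟩ : Fin N) := by
    apply Fin.ext
    simp only [Fin.val_rev, hL0]
    omega
  have hrev1 : L1.rev = (⟨j - 1, by omega⟩ : Fin N) := by
    apply Fin.ext
    simp only [Fin.val_rev, hL1]
    omega
  have hupd_ne : ∀ l : Fin N, l ≠ L0 → X' l.rev = X l.rev := by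
    intro l hl
    rw [hX'def]
    apply Function.update_of_ne
    intro h
    apply hl
    have hval : N - ((l : ℕ) + 1) = j - 2 := by
      have h2 := congrArg Fin.val h
      rwa [Fin.val_rev] at h2
    apply Fin.ext
    rw [hL0]
    omega
  obtain ⟨M, hM⟩ : ∃ M : Matrix (Fin N) (Fin N) ℂ, M = Matrix.of fun k l : Fin N =>
      (v (N - (l : ℕ)) : ℂ) ^ X l.rev *
        F N v ((k : ℕ) + 1) ((l : ℕ) + 1) (X l.rev - y k.rev) a b r := ⟨_, rfl⟩
  obtain ⟨M', hM'⟩ : ∃ M : Matrix (Fin N) (Fin N) ℂ, M = Matrix.of fun k l : Fin N =>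
      (v (N - (l : ℕ)) : ℂ) ^ X' l.rev *
        F N v ((k : ℕ) + 1) ((l : ℕ) + 1) (X' l.rev - y k.rev) a b r := ⟨_, rfl⟩
  have hXL0 : X L0.rev = x := by rw [hrev0, hX, ← hxdef]
  have hX'L0 : X' L0.rev = x + 1 := by
    rw [hrev0, hX'def, Function.update_self, ← hxdef]
  have hXL1 : X L1.rev = x := by rw [hrev1, ← hxdef]
  have hMeq : ∀ k l, l ≠ L0 → M k l = M' k l := by
    intro k l hl
    simp only [hM, hM', Matrix.of_apply, hupd_ne l hl]
  have hvj : (v j : ℂ) ≠ 0 := by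
    have := hv j (by omega) hjN
    exact_mod_cast this.ne'
  have hvj1 : (v (j - 1) : ℂ) ≠ 0 := by
    have := hv (j - 1) (by omega) (by omega)
    exact_mod_cast this.ne'
  obtain ⟨c, hcdef⟩ : ∃ c : ℂ, c = ((v j / v (j - 1) : ℝ) : ℂ) := ⟨_, rfl⟩
  obtain ⟨d, hddef⟩ : ∃ d : ℂ, d = ((v (j - 1) : ℂ) / (v j : ℂ)) ^ x := ⟨_, rfl⟩
  obtain ⟨A, hA⟩ : ∃ A : Matrix (Fin N) (Fin N) ℂ,
      A = M'.updateCol L0 (c • fun k => M' k L0) := ⟨_, rfl⟩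
  have hL01' : L0 ≠ L1 := by
    intro h
    have := congrArg Fin.val h
    rw [hL0, hL1] at this
    omega
  have key : M = A.updateCol L0 (fun k => A k L0 + d • A k L1) := by
    ext k l
    by_cases hl : l = L0
    · subst hl
      rw [Matrix.updateCol_self]
      have hA0 : A k l = c * M' k l := by
        rw [hA, Matrix.updateCol_self]; simp
      have hA1 : A k L1 = M k L1 := by
        rw [hA, Matrix.updateCol_ne hL01'.symm, ← hMeq k L1 hL01'.symm]
      rw [hA0, hA1, smul_eq_mul]
      simp only [hM, hM', Matrix.of_apply, hXL0, hX'L0, hXL1]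
      have hNL0 : N - (l : ℕ) = j - 1 := by rw [hL0]; omega
      have hNL1 : N - (L1 : ℕ) = j := by rw [hL1]; omega
      have hl1 : (l : ℕ) + 1 = (N - j) + 2 := by rw [hL0]
      have hl2 : (L1 : ℕ) + 1 = (N - j) + 1 := by rw [hL1]
      rw [hNL0, hNL1, hl1, hl2]
      have hrec := F_rec N v hv r hr hr' ((k : ℕ) + 1) (N - j) (by omega) (x - y k.rev) a b
      rw [show N - (N - j) = j by omega] at hrec
      rw [hrec]
      rw [show x + 1 - y k.rev = x - y k.rev + 1 by ring]
      obtain ⟨F1, hF1⟩ : ∃ z : ℂ, z = F N v ((k : ℕ) + 1) (N - j + 2) (x - y k.rev) a b r :=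
        ⟨_, rfl⟩
      obtain ⟨F2, hF2⟩ : ∃ z : ℂ, z = F N v ((k : ℕ) + 1) (N - j + 2) (x - y k.rev + 1) a b r :=
        ⟨_, rfl⟩
      rw [← hF1, ← hF2]
      have e1 : d * (v j : ℂ) ^ x = (v (j - 1) : ℂ) ^ x := by
        rw [hddef, div_zpow, div_mul_cancel₀]
        exact zpow_ne_zero _ hvj
      have e3 : c * ((v (j - 1) : ℂ)) ^ (x + 1) = (v j : ℂ) * (v (j - 1) : ℂ) ^ x := by
        rw [hcdef, zpow_add_one₀ hvj1]
        push_cast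
        field_simp
      linear_combination ((v j : ℂ) * F2 - F1) * e1 - F2 * e3
    · rw [Matrix.updateCol_ne hl, hA, Matrix.updateCol_ne hl]
      exact hMeq k l hl
  have hW1 : W N v y a b r X = M.det := by rw [hM]; rfl
  have hW2 : W N v y a b r X' = M'.det := by rw [hM']; rfl
  rw [hW1, key, Matrix.det_updateCol_add_smul_self A hL01' d, hA,
    Matrix.det_updateCol_smul, Matrix.updateCol_eq_self, hW2, hcdef]
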